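/- arXiv:2105.00772 — 5 statements merged into one kernel-verified Lean document; each statement's English description precedes it below -/
import Mathlib

section
/- Let M be a monoid with a topology τ and X a right M-set. Then the action X × M → X is continuous (X discrete) if and only if for each x ∈ X the equivalence relation 𝔯_x := {(p,q) ∈ M × M | x·p = x·q} is an open subset of M × M with the product topology τ × τ. -/
theorem stmt1 {M X : Type*} [Monoid M] [TopologicalSpace M]
    [TopologicalSpace X] [DiscreteTopology X]
    (act : X → M → X)
    (act_one : ∀ x, act x 1 = x)
    (act_mul : ∀ x m n, act x (m * n) = act (act x m) n) :
    Continuous (fun p : X × M => act p.1 p.2) ↔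
      ∀ x : X, IsOpen {pq : M × M | act x pq.1 = act x pq.2} := by
  constructor
  · intro h x
    have hc : Continuous fun pq : M × M => (act x pq.1, act x pq.2) := by
      exact (h.comp (continuous_const.prodMk continuous_fst)).prodMk
        (h.comp (continuous_const.prodMk continuous_snd))
    exact (isOpen_discrete {p : X × X | p.1 = p.2}).preimage hc
  · intro h
    rw [continuous_discrete_rng]
    intro y
    rw [isOpen_iff_mem_nhds]
    rintro ⟨x, m⟩ hm
    simp only [Set.mem_preimage, Set.mem_singleton_iff] at hm
    have hV : IsOpen {n : M | act x n = act x m} := by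
      have := (h x).preimage
        (continuous_id.prodMk continuous_const : Continuous fun n : M => (n, m))
      exact this
    rw [mem_nhds_iff]
    refine ⟨{x} ×ˢ {n : M | act x n = act x m}, ?_, (isOpen_discrete {x}).prod hV, ?_⟩
    · rintro ⟨a, b⟩ ⟨ha, hb⟩
      simp only [Set.mem_singleton_iff] at ha
      simp only [Set.mem_setOf_eq] at hb
      simp only [Set.mem_preimage, Set.mem_singleton_iff]
      rw [ha, hb, hm]
    · exact ⟨rfl, rfl⟩
end

section
/- Let M be a monoid with a topology τ and X a right M-set. Define R(X) := {x ∈ X | for all p, q ∈ M, the set {m ∈ M | (x·q)·m = (x·q)·p} is open in τ}. Then R(X) is closed under the right M-action (x ∈ R(X) and q ∈ M imply x·q ∈ R(X)), and the restricted action R(X) × M → R(X) is continuous when R(X) is given the discrete topology. -/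
theorem stmt3 {M X : Type*} [Monoid M] [TopologicalSpace M]
    [TopologicalSpace X] [DiscreteTopology X]
    (act : X → M → X)
    (act_one : ∀ x, act x 1 = x)
    (act_mul : ∀ x m n, act x (m * n) = act (act x m) n) :
    let S : Set X :=
      {x | ∀ p q : M, IsOpen {m : M | act (act x q) m = act (act x q) p}}
    (∀ x ∈ S, ∀ q : M, act x q ∈ S) ∧
      Continuous (fun p : (↥S) × M => act (p.1 : X) p.2) := by
  intro S
  have key : ∀ x ∈ S, ∀ y : X, IsOpen {m : M | act x m = y} := by
    intro x hx y
    by_cases h : ∃ p, act x p = y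
    · obtain ⟨p, hp⟩ := h
      have := hx p 1
      simp only [act_one] at this
      rw [← hp]
      exact this
    · convert isOpen_empty
      ext m
      simp only [Set.mem_setOf_eq, Set.mem_empty_iff_false, iff_false]
      exact fun hm => h ⟨m, hm⟩
  constructor
  · intro x hx q p q'
    have := hx p (q * q')
    simpa [act_mul] using this
  · rw [continuous_def]
    intro U _
    rw [isOpen_iff_mem_nhds]
    rintro ⟨x, m⟩ hxm
    have h1 : {m' | act (x : X) m' = act (x : X) m} ∈ nhds m :=
      (key x x.2 _).mem_nhds rfl
    have h2 : ({x} : Set ↥S) ∈ nhds x :=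
      (isOpen_discrete {x}).mem_nhds rfl
    refine Filter.mem_of_superset (prod_mem_nhds h2 h1) ?_
    rintro ⟨a, b⟩ ⟨ha, hb⟩
    simp only [Set.mem_singleton_iff] at ha
    simp only [Set.mem_setOf_eq] at hb
    show act (a : X) b ∈ U
    rw [ha, hb]
    exact hxm
end

section
/- Let M be a monoid with a topology τ such that for every open set A ∈ τ and every a ∈ M: (i) a^*(A) := {k ∈ M | ak ∈ A} is open, and (ii) I_A^a := {m ∈ M | m^*(A) = a^*(A)} is open. Then the multiplication map μ : M × M → M is continuous with respect to τ. -/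
theorem stmt8 {M : Type*} [Monoid M] [TopologicalSpace M]
    (h1 : ∀ A : Set M, IsOpen A → ∀ a : M, IsOpen {k : M | a * k ∈ A})
    (h2 : ∀ A : Set M, IsOpen A → ∀ a : M,
      IsOpen {m : M | {k : M | m * k ∈ A} = {k : M | a * k ∈ A}}) :
    Continuous (fun p : M × M => p.1 * p.2) := by
  rw [continuous_def]
  intro A hA
  rw [isOpen_prod_iff]
  intro a b hab
  refine ⟨{m : M | {k : M | m * k ∈ A} = {k : M | a * k ∈ A}},
    {k : M | a * k ∈ A}, h2 A hA a, h1 A hA a, rfl, hab, ?_⟩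
  rintro ⟨x, y⟩ ⟨hx, hy⟩
  simp only [Set.mem_setOf_eq] at hx hy ⊢
  have := Set.ext_iff.mp hx y
  simpa using this.mpr hy
end

section
/- Let (M', τ') be a Hausdorff topological monoid possessing a base of open sets consisting of clopen sets U with the property that for every p ∈ M' the set {q ∈ M' | q^*(U) = p^*(U)} is open, where q^*(U) = {k | qk ∈ U}. Then for every idempotent e ∈ M' (e·e = e), the principal left ideal M'e = {me | m ∈ M'} and the principal right ideal eM' = {em | m ∈ M'} are closed subsets of M'. -/
theorem stmt12 {M' : Type*} [Monoid M'] [TopologicalSpace M'] [ContinuousMul M']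
    [T2Space M']
    (hbase : ∃ B : Set (Set M'),
      (∀ U ∈ B, IsClopen U ∧
        ∀ p : M', IsOpen {q : M' | {k : M' | q * k ∈ U} = {k : M' | p * k ∈ U}}) ∧
      TopologicalSpace.IsTopologicalBasis B)
    (e : M') (he : e * e = e) :
    IsClosed {m : M' | ∃ x : M', x * e = m} ∧
      IsClosed {m : M' | ∃ x : M', e * x = m} := by
  constructor
  · have : {m : M' | ∃ x : M', x * e = m} = {p : M' | p * e = p} := by
      ext p
      constructor
      · rintro ⟨x, rfl⟩
        simp only [Set.mem_setOf_eq, mul_assoc, he]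
      · intro h
        exact ⟨p, h⟩
    rw [this]
    exact isClosed_eq (continuous_id.mul continuous_const) continuous_id
  · have : {m : M' | ∃ x : M', e * x = m} = {p : M' | e * p = p} := by
      ext p
      constructor
      · rintro ⟨x, rfl⟩
        simp only [Set.mem_setOf_eq, ← mul_assoc, he]
      · intro h
        exact ⟨p, h⟩
    rw [this]
    exact isClosed_eq (continuous_const.mul continuous_id) continuous_id
end

section
/- Let r be a right congruence on the additive monoid ℕ (an equivalence relation such that (p,q) ∈ r implies (p+m, q+m) ∈ r for all m). If r is not the equality relation, then there exist natural numbers a ≥ 0 and b ≥ 1 such that for all m, n ∈ ℕ: (m,n) ∈ r if and only if m = n, or (m ≥ a and n ≥ a and b divides m − n). -/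
theorem stmt15 (r : Set (ℕ × ℕ))
    (hrefl : ∀ m : ℕ, (m, m) ∈ r)
    (hsymm : ∀ m n : ℕ, (m, n) ∈ r → (n, m) ∈ r)
    (htrans : ∀ m n k : ℕ, (m, n) ∈ r → (n, k) ∈ r → (m, k) ∈ r)
    (hcong : ∀ p q m : ℕ, (p, q) ∈ r → (p + m, q + m) ∈ r)
    (hne : ∃ m n : ℕ, (m, n) ∈ r ∧ m ≠ n) :
    ∃ a b : ℕ, 1 ≤ b ∧
      ∀ m n : ℕ, (m, n) ∈ r ↔
        (m = n ∨ (a ≤ m ∧ a ≤ n ∧ (b : ℤ) ∣ (m : ℤ) - (n : ℤ))) := by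
  classical
  have hQ : ∃ m, ∃ d, 0 < d ∧ (m, m + d) ∈ r := by
    obtain ⟨m, n, hmn, hne'⟩ := hne
    rcases lt_or_gt_of_ne hne' with h | h
    · refine ⟨m, n - m, by omega, ?_⟩
      have he : n = m + (n - m) := by omega
      rwa [he] at hmn
    · refine ⟨n, m - n, by omega, ?_⟩
      have hmn' := hsymm m n hmn
      have he : m = n + (m - n) := by omega
      rwa [he] at hmn'
  have hP : ∃ d, 0 < d ∧ ∃ m, (m, m + d) ∈ r := by
    obtain ⟨m, d, hd, hr⟩ := hQ
    exact ⟨d, hd, m, hr⟩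
  obtain ⟨b, ⟨hb_pos, mb, hmb⟩, hb_min⟩ :
      ∃ b, (0 < b ∧ ∃ m, (m, m + b) ∈ r) ∧
        ∀ e, (0 < e ∧ ∃ m, (m, m + e) ∈ r) → b ≤ e :=
    ⟨Nat.find hP, Nat.find_spec hP, fun e he => Nat.find_le he⟩
  obtain ⟨a, ⟨d₀, hd₀, ha0⟩, ha_min⟩ :
      ∃ a, (∃ d, 0 < d ∧ (a, a + d) ∈ r) ∧
        ∀ m, (∃ d, 0 < d ∧ (m, m + d) ∈ r) → a ≤ m :=
    ⟨Nat.find hQ, Nat.find_spec hQ, fun m h => Nat.find_le h⟩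
  -- shifting a relation to the right
  have hshift : ∀ m d x, (m, m + d) ∈ r → m ≤ x → (x, x + d) ∈ r := by
    intro m d x hr hx
    have h0 := hcong m (m + d) (x - m) hr
    have h1 : m + (x - m) = x := by omega
    have h2 : m + d + (x - m) = x + d := by omega
    rwa [h1, h2] at h0
  -- chain: iterate a period
  have hchain : ∀ m d, (m, m + d) ∈ r → ∀ k, (m, m + k * d) ∈ r := by
    intro m d hr k
    induction k with
    | zero => simpa using hrefl m
    | succ k ih =>
      have h2 : (m + k * d, m + k * d + d) ∈ r := hshift m d (m + k * d) hr (by omega)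
      have h3 := htrans _ _ _ ih h2
      have he : m + k * d + d = m + (k + 1) * d := by ring
      rwa [he] at h3
  -- b divides every positive period
  have hdvd : ∀ m d, 0 < d → (m, m + d) ∈ r → b ∣ d := by
    intro m d hd hr
    set M := max m mb with hM
    have hrM : (M, M + d) ∈ r := hshift m d M hr (le_max_left _ _)
    have hbM : (M, M + b) ∈ r := hshift mb b M hmb (le_max_right _ _)
    have hq : (M, M + (d / b) * b) ∈ r := hchain M b hbM (d / b)
    have hrem : (M + (d / b) * b, M + d) ∈ r := htrans _ _ _ (hsymm _ _ hq) hrM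
    by_contra hnd
    have hrpos : 0 < d % b := by
      rcases Nat.eq_zero_or_pos (d % b) with h | h
      · exact absurd (Nat.dvd_of_mod_eq_zero h) hnd
      · exact h
    have hdm := Nat.div_add_mod d b
    have hcm : b * (d / b) = (d / b) * b := Nat.mul_comm _ _
    have heq : M + d = (M + (d / b) * b) + d % b := by omega
    rw [heq] at hrem
    have h4 := hb_min (d % b) ⟨hrpos, _, hrem⟩
    have h5 := Nat.mod_lt d hb_pos
    omega
  -- (a, a + b) ∈ r
  have hab : (a, a + b) ∈ r := by
    have hX : (a, a + (mb + 1) * d₀) ∈ r := hchain a d₀ ha0 (mb + 1)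
    set X := a + (mb + 1) * d₀ with hXdef
    have hmd : mb ≤ mb * d₀ := Nat.le_mul_of_pos_right mb hd₀
    have hXmb : mb ≤ X := by
      have : (mb + 1) * d₀ = mb * d₀ + d₀ := by ring
      omega
    have hXb : (X, X + b) ∈ r := hshift mb b X hmb hXmb
    have h1 : (a, X + b) ∈ r := htrans _ _ _ hX hXb
    have h2 : (a + b, X + b) ∈ r := hcong a X b hX
    exact htrans _ _ _ h1 (hsymm _ _ h2)
  have habx : ∀ x, a ≤ x → (x, x + b) ∈ r := fun x hx => hshift a b x hab hx
  refine ⟨a, b, hb_pos, fun m n => ⟨?_, ?_⟩⟩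
  · intro hr
    by_cases hmn : m = n
    · exact Or.inl hmn
    · right
      rcases lt_or_gt_of_ne hmn with h | h
      · have he : n = m + (n - m) := by omega
        have hr' : (m, m + (n - m)) ∈ r := by rwa [he] at hr
        have ham : a ≤ m := ha_min m ⟨n - m, by omega, hr'⟩
        have hbd : b ∣ n - m := hdvd m (n - m) (by omega) hr'
        refine ⟨ham, by omega, ?_⟩
        have h1 : (b : ℤ) ∣ ((n - m : ℕ) : ℤ) := Int.natCast_dvd_natCast.mpr hbd
        rw [Nat.cast_sub (le_of_lt h)] at h1
        exact dvd_sub_comm.mp h1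
      · have hr2 := hsymm _ _ hr
        have he : m = n + (m - n) := by omega
        have hr' : (n, n + (m - n)) ∈ r := by rwa [he] at hr2
        have han : a ≤ n := ha_min n ⟨m - n, by omega, hr'⟩
        have hbd : b ∣ m - n := hdvd n (m - n) (by omega) hr'
        refine ⟨by omega, han, ?_⟩
        have h1 : (b : ℤ) ∣ ((m - n : ℕ) : ℤ) := Int.natCast_dvd_natCast.mpr hbd
        rwa [Nat.cast_sub (le_of_lt h)] at h1
  · rintro (heq | ⟨ham, han, hd⟩)
    · exact heq ▸ hrefl m
    · rcases le_total m n with h | h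
      · have h1 : (b : ℤ) ∣ ((n - m : ℕ) : ℤ) := by
          rw [Nat.cast_sub h]; exact dvd_sub_comm.mp hd
        obtain ⟨j, hj⟩ := Int.natCast_dvd_natCast.mp h1
        have hj' : n - m = j * b := by rw [hj, Nat.mul_comm]
        have hc := hchain m b (habx m ham) j
        have he : n = m + j * b := by omega
        rwa [he]
      · have h1 : (b : ℤ) ∣ ((m - n : ℕ) : ℤ) := by
          rw [Nat.cast_sub h]; exact hd
        obtain ⟨j, hj⟩ := Int.natCast_dvd_natCast.mp h1
        have hj' : m - n = j * b := by rw [hj, Nat.mul_comm]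
        have hc := hchain n b (habx n han) j
        have he : m = n + j * b := by omega
        exact hsymm _ _ (he ▸ hc)
end
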